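/- If a monoid H is a submonoid of a torsion-free group, then the reduced finitary power monoid P_{fin,1}(H) is acyclic, and hence unit-cancellative and torsion-free. -/
import Mathlib


open scoped Pointwise

/-- Two-sided divisibility in a monoid: `x` divides `y` if `y = u * x * v` for some `u, v`. -/
def DvdTS {M : Type*} [Monoid M] (x y : M) : Prop := ∃ u v : M, y = u * x * v

/-- A unit-divisor is a divisor of the identity. -/
def IsUnitDivisor {M : Type*} [Monoid M] (x : M) : Prop := DvdTS x 1

/-- `x` is a proper divisor of `y` if `x` divides `y` but `y` does not divide `x`. -/
def IsProperDivisorTS {M : Type*} [Monoid M] (x y : M) : Prop := DvdTS x y ∧ ¬ DvdTS y x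

/-- An atom is a non-unit that is not a product of two non-units. -/
def IsAtomTS {M : Type*} [Monoid M] (a : M) : Prop :=
  ¬ IsUnit a ∧ ∀ b c : M, a = b * c → IsUnit b ∨ IsUnit c

/-- A quark is a non-unit-divisor all of whose proper divisors are unit-divisors. -/
def IsQuarkTS {M : Type*} [Monoid M] (a : M) : Prop :=
  ¬ IsUnitDivisor a ∧ ∀ b : M, IsProperDivisorTS b a → IsUnitDivisor b

/-- An irreducible is a non-unit-divisor with no factorization `a = b * c` into proper
divisors that are not unit-divisors. -/
def IsIrredTS {M : Type*} [Monoid M] (a : M) : Prop :=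
  ¬ IsUnitDivisor a ∧
    ¬ ∃ b c : M, a = b * c ∧ IsProperDivisorTS b a ∧ IsProperDivisorTS c a ∧
      ¬ IsUnitDivisor b ∧ ¬ IsUnitDivisor c

def DedekindFiniteM (M : Type*) [Monoid M] : Prop := ∀ x y : M, x * y = 1 → y * x = 1

/-- ACC on principal two-sided ideals: no infinite sequence of consecutive proper divisors. -/
def ACCPrincipalTS (M : Type*) [Monoid M] : Prop :=
  ¬ ∃ f : ℕ → M, ∀ n : ℕ, IsProperDivisorTS (f (n + 1)) (f n)

/-- Factorable: every non-unit-divisor is a (non-empty) product of irreducibles. -/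
def FactorableM (M : Type*) [Monoid M] : Prop :=
  ∀ x : M, ¬ IsUnitDivisor x →
    ∃ l : List M, l ≠ [] ∧ (∀ a ∈ l, IsIrredTS a) ∧ l.prod = x

/-- Atomic: every non-unit-divisor is a (non-empty) product of atoms. -/
def AtomicM (M : Type*) [Monoid M] : Prop :=
  ∀ x : M, ¬ IsUnitDivisor x →
    ∃ l : List M, l ≠ [] ∧ (∀ a ∈ l, IsAtomTS a) ∧ l.prod = x

/-- The finitary power monoid: non-empty finite subsets of `H` under setwise multiplication. -/
def PfinM (H : Type*) [Monoid H] : Submonoid (Set H) where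
  carrier := {X : Set H | X.Finite ∧ X.Nonempty}
  mul_mem' := fun hX hY => ⟨hX.1.mul hY.1, hX.2.mul hY.2⟩
  one_mem' := ⟨Set.finite_one, 1, Set.mem_one.mpr rfl⟩

/-- The restricted finitary power monoid: non-empty finite subsets of `H` containing a unit. -/
def PfinTimes (H : Type*) [Monoid H] : Submonoid (Set H) where
  carrier := {X : Set H | X.Finite ∧ ∃ u ∈ X, IsUnit u}
  mul_mem' := by
    rintro X Y ⟨hXf, u, hu, hu'⟩ ⟨hYf, v, hv, hv'⟩
    exact ⟨hXf.mul hYf, u * v, Set.mul_mem_mul hu hv, hu'.mul hv'⟩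
  one_mem' := ⟨Set.finite_one, 1, Set.mem_one.mpr rfl, isUnit_one⟩

/-- The reduced finitary power monoid: finite subsets of `H` containing `1`. -/
def PfinOne (H : Type*) [Monoid H] : Submonoid (Set H) where
  carrier := {X : Set H | X.Finite ∧ (1 : H) ∈ X}
  mul_mem' := by
    rintro X Y ⟨hXf, hX1⟩ ⟨hYf, hY1⟩
    exact ⟨hXf.mul hYf, by simpa using Set.mul_mem_mul hX1 hY1⟩
  one_mem' := ⟨Set.finite_one, Set.mem_one.mpr rfl⟩

lemma mem_PfinM {H : Type*} [Monoid H] {X : Set H} :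
    X ∈ PfinM H ↔ X.Finite ∧ X.Nonempty := Iff.rfl

lemma mem_PfinTimes {H : Type*} [Monoid H] {X : Set H} :
    X ∈ PfinTimes H ↔ X.Finite ∧ ∃ u ∈ X, IsUnit u := Iff.rfl

lemma mem_PfinOne {H : Type*} [Monoid H] {X : Set H} :
    X ∈ PfinOne H ↔ X.Finite ∧ (1 : H) ∈ X := Iff.rfl

/-- Acyclic: `u * x * v ≠ x` whenever `u` or `v` is a non-unit. -/
def AcyclicM (M : Type*) [Monoid M] : Prop :=
  ∀ u v x : M, (¬ IsUnit u ∨ ¬ IsUnit v) → u * x * v ≠ x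

/-- Unit-cancellative: `x * y ≠ x ≠ y * x` whenever `y` is a non-unit. -/
def UnitCancellativeM (M : Type*) [Monoid M] : Prop :=
  ∀ x y : M, ¬ IsUnit y → x * y ≠ x ∧ y * x ≠ x

/-- Strongly unit-cancellative: `x * y ≠ x ≠ y * x` whenever `y ≠ 1`. -/
def StrongUnitCancellativeM (M : Type*) [Monoid M] : Prop :=
  ∀ x y : M, y ≠ 1 → x * y ≠ x ∧ y * x ≠ x

/-- Torsion-free: the identity is the only element with finitely many powers. -/
def TorsionFreeM (M : Type*) [Monoid M] : Prop :=
  ∀ x : M, (Set.range fun k : ℕ => x ^ k).Finite → x = 1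

/-- Cancellative monoid. -/
def CancellativeM (M : Type*) [Monoid M] : Prop :=
  ∀ a x y : M, (a * x = a * y → x = y) ∧ (x * a = y * a → x = y)

/-- The set of lengths of (irreducible) factorizations of `x`, with the conventions
`L(1) = {0}` and `L(u) = ∅` for a unit-divisor `u ≠ 1`. -/
def LengthSet {M : Type*} [Monoid M] (x : M) : Set ℕ :=
  {n | (x = 1 ∧ n = 0) ∨
    (¬ IsUnitDivisor x ∧
      ∃ l : List M, l.length = n ∧ l ≠ [] ∧ (∀ a ∈ l, IsIrredTS a) ∧ l.prod = x)}

/-- The system of lengths: the family of non-empty length sets. -/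
def SystemOfLengths (M : Type*) [Monoid M] : Set (Set ℕ) :=
  {L | L.Nonempty ∧ ∃ x : M, LengthSet x = L}

lemma pfinOne_isUnit_iff {M : Type*} [Monoid M] (X : PfinOne M) : IsUnit X ↔ X = 1 := by
  constructor
  · intro h
    obtain ⟨Y, hY⟩ := h.exists_right_inv
    have hset : (X : Set M) * (Y : Set M) = 1 := by
      have := congrArg Subtype.val hY
      simpa [Submonoid.coe_mul] using this
    apply Subtype.ext
    apply Set.eq_of_subset_of_subset
    · intro x hx
      have h1Y : (1 : M) ∈ (Y : Set M) := Y.2.2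
      have : x * 1 ∈ (X : Set M) * (Y : Set M) := Set.mul_mem_mul hx h1Y
      rw [mul_one, hset] at this
      exact this
    · intro x hx
      simp only [OneMemClass.coe_one, Set.mem_one] at hx
      subst hx
      exact X.2.2
  · rintro rfl; exact isUnit_one

lemma pfinOne_key {G : Type*} [Group G] (hG : TorsionFreeM G) (H : Submonoid G)
    (u : H) (X : Set H) (hX : X.Finite) (hstep : ∀ k : ℕ, u ^ k ∈ X) : u = 1 := by
  have hfin : (Set.range fun k : ℕ => u ^ k).Finite :=
    hX.subset (Set.range_subset_iff.mpr hstep)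
  have hninj : ¬ Function.Injective (fun k : ℕ => u ^ k) := fun hinj =>
    (Set.infinite_range_of_injective hinj) hfin
  obtain ⟨i, j, hij, hne⟩ := Function.not_injective_iff.mp hninj
  -- WLOG i < j
  have main : ∀ i j : ℕ, i < j → u ^ i = u ^ j → u = 1 := by
    intro i j hlt heq
    have hG' : (u : G) ^ i = (u : G) ^ j := by
      have := congrArg (Subtype.val) heq
      simpa [SubmonoidClass.coe_pow] using this
    set n := j - i with hn
    have hnpos : 0 < n := Nat.sub_pos_of_lt hlt
    have hpow : (u : G) ^ n = 1 := by
      have h1 : (u : G) ^ n * (u : G) ^ i = (u : G) ^ j := by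
        rw [← pow_add, Nat.sub_add_cancel hlt.le]
      have h2 : (u : G) ^ n * (u : G) ^ i = 1 * (u : G) ^ i := by
        rw [h1, ← hG', one_mul]
      exact mul_right_cancel h2
    have hfinG : (Set.range fun k : ℕ => (u : G) ^ k).Finite := by
      apply Set.Finite.subset ((Set.finite_Iio n).image (fun k => (u : G) ^ k))
      rintro _ ⟨k, rfl⟩
      exact ⟨k % n, Nat.mod_lt _ hnpos, (pow_eq_pow_mod k hpow).symm⟩
    have : (u : G) = 1 := hG _ hfinG
    exact Subtype.ext this
  rcases lt_or_gt_of_ne hne with h | h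
  · exact main i j h hij
  · exact main j i h hij.symm

/-- if `H` is a submonoid of a torsion-free group, then `P_{fin,1}(H)` is
acyclic, hence unit-cancellative and torsion-free. -/
theorem pfinOne_acyclic_of_torsion_free_group {G : Type*} [Group G]
    (hG : TorsionFreeM G) (H : Submonoid G) :
    AcyclicM (PfinOne H) ∧ UnitCancellativeM (PfinOne H) ∧ TorsionFreeM (PfinOne H) := by
  have hacyclic : AcyclicM (PfinOne H) := by
    rintro U V X h heq
    have hseteq : (U : Set H) * (X : Set H) * (V : Set H) = (X : Set H) := by
      have := congrArg Subtype.val heq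
      simpa [Submonoid.coe_mul] using this
    have hU1 : (1 : H) ∈ (U : Set H) := U.2.2
    have hV1 : (1 : H) ∈ (V : Set H) := V.2.2
    have hXfin : (X : Set H).Finite := X.2.1
    have hX1 : (1 : H) ∈ (X : Set H) := X.2.2
    rcases h with h | h
    · -- U is not a unit, so there is u ∈ U with u ≠ 1
      rw [pfinOne_isUnit_iff] at h
      have : ∃ u ∈ (U : Set H), u ≠ (1 : H) := by
        by_contra hc
        push_neg at hc
        apply h
        apply Subtype.ext
        apply Set.eq_of_subset_of_subset
        · intro x hx; simp only [OneMemClass.coe_one, Set.mem_one]; exact hc x hx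
        · intro x hx; simp only [OneMemClass.coe_one, Set.mem_one] at hx; subst hx; exact hU1
      obtain ⟨u, hu, hune⟩ := this
      have hstep : ∀ y ∈ (X : Set H), u * y ∈ (X : Set H) := by
        intro y hy
        have : u * y * 1 ∈ (U : Set H) * (X : Set H) * (V : Set H) :=
          Set.mul_mem_mul (Set.mul_mem_mul hu hy) hV1
        rwa [mul_one, hseteq] at this
      have hpow : ∀ k : ℕ, u ^ k ∈ (X : Set H) := by
        intro k
        induction k with
        | zero => simpa using hX1
        | succ n ih =>
          have := hstep _ ih
          rwa [← pow_succ'] at this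
      exact hune (pfinOne_key hG H u _ hXfin hpow)
    · rw [pfinOne_isUnit_iff] at h
      have : ∃ v ∈ (V : Set H), v ≠ (1 : H) := by
        by_contra hc
        push_neg at hc
        apply h
        apply Subtype.ext
        apply Set.eq_of_subset_of_subset
        · intro x hx; simp only [OneMemClass.coe_one, Set.mem_one]; exact hc x hx
        · intro x hx; simp only [OneMemClass.coe_one, Set.mem_one] at hx; subst hx; exact hV1
      obtain ⟨v, hv, hvne⟩ := this
      have hstep : ∀ y ∈ (X : Set H), y * v ∈ (X : Set H) := by
        intro y hy
        have : 1 * y * v ∈ (U : Set H) * (X : Set H) * (V : Set H) :=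
          Set.mul_mem_mul (Set.mul_mem_mul hU1 hy) hv
        rwa [one_mul, hseteq] at this
      have hpow : ∀ k : ℕ, v ^ k ∈ (X : Set H) := by
        intro k
        induction k with
        | zero => simpa using hX1
        | succ n ih =>
          have := hstep _ ih
          rwa [← pow_succ] at this
      exact hvne (pfinOne_key hG H v _ hXfin hpow)
  refine ⟨hacyclic, ?_, ?_⟩
  · intro x y hy
    constructor
    · intro hxy
      exact hacyclic 1 y x (Or.inr hy) (by rwa [one_mul])
    · intro hyx
      exact hacyclic y 1 x (Or.inl hy) (by rwa [mul_one])
  · intro X hfin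
    have hninj : ¬ Function.Injective (fun k : ℕ => X ^ k) := fun hinj =>
      (Set.infinite_range_of_injective hinj) hfin
    obtain ⟨i, j, hij, hne⟩ := Function.not_injective_iff.mp hninj
    have main : ∀ i j : ℕ, i < j → X ^ i = X ^ j → X = 1 := by
      intro i j hlt heq
      set n := j - i with hn
      have hnpos : 0 < n := Nat.sub_pos_of_lt hlt
      have hpow : X ^ n = 1 := by
        have hu : IsUnit (X ^ n) := by
          by_contra hnu
          refine hacyclic 1 (X ^ n) (X ^ i) (Or.inr hnu) ?_
          rw [one_mul, ← pow_add, Nat.add_sub_cancel' hlt.le, ← heq]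
        rwa [pfinOne_isUnit_iff] at hu
      have hXunit : IsUnit X := by
        refine ⟨⟨X, X ^ (n - 1), ?_, ?_⟩, rfl⟩
        · rw [← pow_succ', Nat.sub_add_cancel hnpos, hpow]
        · rw [← pow_succ, Nat.sub_add_cancel hnpos, hpow]
      rwa [pfinOne_isUnit_iff] at hXunit
    rcases lt_or_gt_of_ne hne with h | h
    · exact main i j h hij
    · exact main j i h hij.symm
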